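/- Let Ω ⊆ ℝ² be open, let α, β : ℝ² → ℝ be differentiable on Ω with 4α − β² > 0, and let λ : ℝ² → ℂ be differentiable on Ω with λ² + βλ + α = 0 and Im λ > 0 on Ω. Let G₀, G₁ : ℝ² → ℝ be functions satisfying G₀ + G₁·λ = λ_x + λ·λ_y on Ω. For pairs of real functions define the pointwise product (U,V) * (S,T) := (U·S − α·V·T, U·T + V·S − β·V·T) and the operator D(U,V) := (U_x − α·V_y + V·G₀, V_x + U_y − β·V_y + V·G₁). Then for all pairs W = (U,V) and Z = (S,T) of functions ℝ² → ℝ differentiable on Ω, the Leibniz rule D(W * Z) = (DW) * Z + W * (DZ) holds at every point of Ω. -/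

import Mathlib

open Complex

noncomputable def pdx (f : ℝ × ℝ → ℂ) (p : ℝ × ℝ) : ℂ := fderiv ℝ f p (1, 0)
noncomputable def pdy (f : ℝ × ℝ → ℂ) (p : ℝ × ℝ) : ℂ := fderiv ℝ f p (0, 1)
noncomputable def pdxR (f : ℝ × ℝ → ℝ) (p : ℝ × ℝ) : ℝ := fderiv ℝ f p (1, 0)
noncomputable def pdyR (f : ℝ × ℝ → ℝ) (p : ℝ × ℝ) : ℝ := fderiv ℝ f p (0, 1)

/-- Pointwise product in the fiber algebra `A_z = ℝ[X]/(X² + β(z)X + α(z))`,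
on pairs `(U, V)` representing `U + V·X`. -/
def fprod (α β : ℝ × ℝ → ℝ) (W Z : (ℝ × ℝ → ℝ) × (ℝ × ℝ → ℝ)) :
    (ℝ × ℝ → ℝ) × (ℝ × ℝ → ℝ) :=
  (fun p => W.1 p * Z.1 p - α p * W.2 p * Z.2 p,
   fun p => W.1 p * Z.2 p + W.2 p * Z.1 p - β p * W.2 p * Z.2 p)

/-- The operator `D`, modelling twice the algebra-level Cauchy–Riemann operator. -/
noncomputable def Dop (α β G₀ G₁ : ℝ × ℝ → ℝ) (W : (ℝ × ℝ → ℝ) × (ℝ × ℝ → ℝ)) :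
    (ℝ × ℝ → ℝ) × (ℝ × ℝ → ℝ) :=
  (fun p => pdxR W.1 p - α p * pdyR W.2 p + W.2 p * G₀ p,
   fun p => pdxR W.2 p + pdyR W.1 p - β p * pdyR W.2 p + W.2 p * G₁ p)

section Helpers

private lemma fdMul {f g : ℝ × ℝ → ℝ} {p : ℝ × ℝ} (hf : DifferentiableAt ℝ f p)
    (hg : DifferentiableAt ℝ g p) (w : ℝ × ℝ) :
    fderiv ℝ (fun q => f q * g q) p w
      = fderiv ℝ f p w * g p + f p * fderiv ℝ g p w := by
  rw [fderiv_fun_mul hf hg]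
  simp [smul_eq_mul]
  ring

private lemma fdShape1 {u v s t a : ℝ × ℝ → ℝ} {p : ℝ × ℝ}
    (hu : DifferentiableAt ℝ u p) (hv : DifferentiableAt ℝ v p)
    (hs : DifferentiableAt ℝ s p) (ht : DifferentiableAt ℝ t p)
    (ha : DifferentiableAt ℝ a p) (w : ℝ × ℝ) :
    fderiv ℝ (fun q => u q * s q - a q * v q * t q) p w
      = fderiv ℝ u p w * s p + u p * fderiv ℝ s p w
        - ((fderiv ℝ a p w * v p + a p * fderiv ℝ v p w) * t p
            + a p * v p * fderiv ℝ t p w) := by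
  rw [fderiv_fun_sub (hu.fun_mul hs) ((ha.fun_mul hv).fun_mul ht), ContinuousLinearMap.sub_apply,
    fdMul (ha.fun_mul hv) ht, fdMul ha hv, fdMul hu hs]

private lemma fdShape2 {u v s t b : ℝ × ℝ → ℝ} {p : ℝ × ℝ}
    (hu : DifferentiableAt ℝ u p) (hv : DifferentiableAt ℝ v p)
    (hs : DifferentiableAt ℝ s p) (ht : DifferentiableAt ℝ t p)
    (hb : DifferentiableAt ℝ b p) (w : ℝ × ℝ) :
    fderiv ℝ (fun q => u q * t q + v q * s q - b q * v q * t q) p w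
      = fderiv ℝ u p w * t p + u p * fderiv ℝ t p w
        + (fderiv ℝ v p w * s p + v p * fderiv ℝ s p w)
        - ((fderiv ℝ b p w * v p + b p * fderiv ℝ v p w) * t p
            + b p * v p * fderiv ℝ t p w) := by
  rw [fderiv_fun_sub ((hu.fun_mul ht).fun_add (hv.fun_mul hs)) ((hb.fun_mul hv).fun_mul ht),
    ContinuousLinearMap.sub_apply, fderiv_fun_add (hu.fun_mul ht) (hv.fun_mul hs),
    ContinuousLinearMap.add_apply, fdMul (hb.fun_mul hv) ht, fdMul hb hv, fdMul hu ht,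
    fdMul hv hs]

end Helpers

/-- Leibniz rule for the algebra-level Cauchy–Riemann operator, without any
rigidity assumption. -/
theorem stmt3
    (Ω : Set (ℝ × ℝ)) (hΩ : IsOpen Ω)
    (α β : ℝ × ℝ → ℝ) (lam : ℝ × ℝ → ℂ) (G₀ G₁ : ℝ × ℝ → ℝ)
    (hα : ∀ p ∈ Ω, DifferentiableAt ℝ α p)
    (hβ : ∀ p ∈ Ω, DifferentiableAt ℝ β p)
    (hlam : ∀ p ∈ Ω, DifferentiableAt ℝ lam p)
    (hell : ∀ p ∈ Ω, 4 * α p - (β p) ^ 2 > 0)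
    (hquad : ∀ p ∈ Ω, (lam p) ^ 2 + (β p : ℂ) * lam p + (α p : ℂ) = 0)
    (him : ∀ p ∈ Ω, 0 < (lam p).im)
    (hG : ∀ p ∈ Ω, (G₀ p : ℂ) + (G₁ p : ℂ) * lam p = pdx lam p + lam p * pdy lam p)
    (W Z : (ℝ × ℝ → ℝ) × (ℝ × ℝ → ℝ))
    (hW1 : ∀ p ∈ Ω, DifferentiableAt ℝ W.1 p) (hW2 : ∀ p ∈ Ω, DifferentiableAt ℝ W.2 p)
    (hZ1 : ∀ p ∈ Ω, DifferentiableAt ℝ Z.1 p) (hZ2 : ∀ p ∈ Ω, DifferentiableAt ℝ Z.2 p) :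
    ∀ p ∈ Ω,
      (Dop α β G₀ G₁ (fprod α β W Z)).1 p
        = (fprod α β (Dop α β G₀ G₁ W) Z).1 p + (fprod α β W (Dop α β G₀ G₁ Z)).1 p ∧
      (Dop α β G₀ G₁ (fprod α β W Z)).2 p
        = (fprod α β (Dop α β G₀ G₁ W) Z).2 p + (fprod α β W (Dop α β G₀ G₁ Z)).2 p := by
  intro p hp
  have hU := hW1 p hp
  have hV := hW2 p hp
  have hS := hZ1 p hp
  have hT := hZ2 p hp
  have ha := hα p hp
  have hb := hβ p hp
  have hl := hlam p hp
  -- complex lifts of α, β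
  have hca : HasFDerivAt (fun q => (α q : ℂ)) (Complex.ofRealCLM.comp (fderiv ℝ α p)) p :=
    (Complex.ofRealCLM.hasFDerivAt).comp p ha.hasFDerivAt
  have hcb : HasFDerivAt (fun q => (β q : ℂ)) (Complex.ofRealCLM.comp (fderiv ℝ β p)) p :=
    (Complex.ofRealCLM.hasFDerivAt).comp p hb.hasFDerivAt
  -- the quadratic function as a function, identically zero near p
  have hF : HasFDerivAt (fun q => lam q * lam q + (β q : ℂ) * lam q + (α q : ℂ))
      ((lam p • fderiv ℝ lam p + lam p • fderiv ℝ lam p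
        + ((β p : ℂ) • fderiv ℝ lam p + lam p • Complex.ofRealCLM.comp (fderiv ℝ β p)))
        + Complex.ofRealCLM.comp (fderiv ℝ α p)) p :=
    ((hl.hasFDerivAt.mul hl.hasFDerivAt).add (hcb.mul hl.hasFDerivAt)).add hca
  have hFz : fderiv ℝ (fun q => lam q * lam q + (β q : ℂ) * lam q + (α q : ℂ)) p = 0 := by
    have hev : (fun q => lam q * lam q + (β q : ℂ) * lam q + (α q : ℂ))
        =ᶠ[nhds p] (fun _ => (0 : ℂ)) := by
      filter_upwards [hΩ.mem_nhds hp] with q hq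
      have h := hquad q hq
      rw [pow_two] at h
      exact h
    rw [hev.fderiv_eq]
    exact fderiv_const_apply 0
  have hFL : (lam p • fderiv ℝ lam p + lam p • fderiv ℝ lam p
        + ((β p : ℂ) • fderiv ℝ lam p + lam p • Complex.ofRealCLM.comp (fderiv ℝ β p)))
        + Complex.ofRealCLM.comp (fderiv ℝ α p) = 0 := by
    rw [← hF.fderiv]; exact hFz
  have hEx : lam p * fderiv ℝ lam p (1, 0) + lam p * fderiv ℝ lam p (1, 0)
      + ((β p : ℂ) * fderiv ℝ lam p (1, 0) + lam p * ((fderiv ℝ β p (1, 0) : ℝ) : ℂ))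
      + ((fderiv ℝ α p (1, 0) : ℝ) : ℂ) = 0 := by
    have := congrArg (fun (L : (ℝ × ℝ) →L[ℝ] ℂ) => L (1, 0)) hFL
    simpa [smul_eq_mul] using this
  have hEy : lam p * fderiv ℝ lam p (0, 1) + lam p * fderiv ℝ lam p (0, 1)
      + ((β p : ℂ) * fderiv ℝ lam p (0, 1) + lam p * ((fderiv ℝ β p (0, 1) : ℝ) : ℂ))
      + ((fderiv ℝ α p (0, 1) : ℝ) : ℂ) = 0 := by
    have := congrArg (fun (L : (ℝ × ℝ) →L[ℝ] ℂ) => L (0, 1)) hFL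
    simpa [smul_eq_mul] using this
  have hGp := hG p hp
  simp only [pdx, pdy] at hGp
  have hqp := hquad p hp
  -- the two key real identities
  have hAB : ((pdxR α p - α p * pdyR β p + β p * G₀ p - 2 * α p * G₁ p : ℝ) : ℂ)
      + ((pdxR β p + pdyR α p - β p * pdyR β p + 2 * G₀ p - β p * G₁ p : ℝ) : ℂ) * lam p
        = 0 := by
    simp only [pdxR, pdyR]
    push_cast
    linear_combination hEx + lam p * hEy + (2 * lam p + (β p : ℂ)) * hGp
      - (2 * (G₁ p : ℂ) + ((fderiv ℝ β p (0, 1) : ℝ) : ℂ)) * hqp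
  have him' := him p hp
  have hB : pdxR β p + pdyR α p - β p * pdyR β p + 2 * G₀ p - β p * G₁ p = 0 := by
    have h := congrArg Complex.im hAB
    simp [Complex.add_im, Complex.mul_im] at h
    rcases h with h | h
    · exact h
    · exact absurd h (ne_of_gt him')
  have hA : pdxR α p - α p * pdyR β p + β p * G₀ p - 2 * α p * G₁ p = 0 := by
    have h := congrArg Complex.re hAB
    simp [Complex.add_re, Complex.mul_re] at h
    rw [hB] at h
    simpa using h
  -- now the real computation
  simp only [Dop, fprod, pdxR, pdyR] at *
  constructor
  · rw [fdShape1 hU hV hS hT ha (1, 0),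
      fdShape2 hU hV hS hT hb (0, 1)]
    linear_combination (-(W.2 p * Z.2 p)) * hA
  · rw [fdShape2 hU hV hS hT hb (1, 0),
      fdShape1 hU hV hS hT ha (0, 1),
      fdShape2 hU hV hS hT hb (0, 1)]
    linear_combination (-(W.2 p * Z.2 p)) * hB
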